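/- Let s > 1 and l ≥ 3, and let G_{s,l} = F_{s,l}·F'_{s,l}. Then for every t ∈ ℝ, (F'_{s,l}(t))² ≤ s²·G'_{s,l}(t). -/

import Mathlib

open Real Set Filter Topology


/-- The auxiliary function `F_{s,l}` of Definition 6.1. -/
noncomputable def Fsl (s l t : ℝ) : ℝ :=
  if |t| ≤ l then |t| ^ s
  else (1 - s ^ 2) * l ^ s + (s * (s + 1) / 2) * l ^ (s - 1) * |t|
    + (s * (s - 1) / 2) * l ^ (s + 1) * |t|⁻¹

noncomputable def Dsl (s l t : ℝ) : ℝ :=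
  if |t| ≤ l then s * |t| ^ (s - 2) * t
  else (s * (s + 1) / 2 * l ^ (s - 1) - s * (s - 1) / 2 * l ^ (s + 1) / t ^ 2) * Real.sign t

lemma hlpow {l a b : ℝ} (hl : 0 < l) (n : ℕ) (hb : a + n = b) : l ^ b = l ^ a * l ^ n := by
  subst hb
  rw [← Real.rpow_natCast l n, ← Real.rpow_add hl]

lemma Djunction {s l : ℝ} (hl : 0 < l) :
    s * (s + 1) / 2 * l ^ (s - 1) - s * (s - 1) / 2 * l ^ (s + 1) / l ^ 2
    = s * l ^ (s - 1) := by
  rw [hlpow hl 2 (by push_cast; ring : (s-1) + (2:ℕ) = s + 1)]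
  have h2 : (l:ℝ) ^ (2:ℕ) ≠ 0 := by positivity
  field_simp; ring

lemma Fjunction {s l : ℝ} (hl : 0 < l) :
    (1 - s ^ 2) * l ^ s + (s * (s + 1) / 2) * l ^ (s - 1) * l
    + (s * (s - 1) / 2) * l ^ (s + 1) * l⁻¹ = l ^ s := by
  have h1 : l ^ (s - 1) * l = l ^ s := by
    rw [← Real.rpow_add_one hl.ne' (s-1)]; ring_nf
  have h2 : l ^ (s + 1) * l⁻¹ = l ^ s := by
    rw [hlpow hl 1 (by push_cast; ring : s + (1:ℕ) = s + 1)]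
    field_simp
  calc (1 - s ^ 2) * l ^ s + (s * (s + 1) / 2) * l ^ (s - 1) * l
      + (s * (s - 1) / 2) * l ^ (s + 1) * l⁻¹
      = (1 - s ^ 2) * l ^ s + (s * (s + 1) / 2) * (l ^ (s - 1) * l)
        + (s * (s - 1) / 2) * (l ^ (s + 1) * l⁻¹) := by ring
    _ = (1 - s ^ 2) * l ^ s + (s * (s + 1) / 2) * l ^ s
        + (s * (s - 1) / 2) * l ^ s := by rw [h1, h2]
    _ = l ^ s := by ring

lemma hasDerivAt_outer {s l : ℝ} (t : ℝ) (ht : t ≠ 0) :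
    HasDerivAt (fun u : ℝ => (1 - s ^ 2) * l ^ s + (s * (s + 1) / 2) * l ^ (s - 1) * u
      + (s * (s - 1) / 2) * l ^ (s + 1) * u⁻¹)
      (s * (s + 1) / 2 * l ^ (s - 1) - s * (s - 1) / 2 * l ^ (s + 1) / t ^ 2) t := by
  have h := ((hasDerivAt_id t).const_mul ((s * (s + 1) / 2) * l ^ (s - 1))).const_add
    ((1 - s ^ 2) * l ^ s)
  have h2 := (hasDerivAt_inv ht).const_mul ((s * (s - 1) / 2) * l ^ (s + 1))
  have h3 := h.add h2
  refine h3.congr_deriv ?_; symm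
  field_simp
  ring

lemma abs_gt_cases {l t : ℝ} (hl : 0 < l) (h : l < |t|) : l < t ∨ t < -l := by
  rcases lt_abs.mp h with h1 | h1
  · exact Or.inl h1
  · exact Or.inr (by linarith)

lemma hasDerivAt_Fsl {s l : ℝ} (hs : 1 < s) (hl : 0 < l) (t : ℝ) :
    HasDerivAt (Fsl s l) (Dsl s l t) t := by
  rcases lt_trichotomy (|t|) l with htl | htl | htl
  · -- |t| < l : inner region
    have h2 : Fsl s l =ᶠ[𝓝 t] fun u => |u| ^ s := by
      have hopen : IsOpen {u : ℝ | |u| < l} := isOpen_lt (by fun_prop) continuous_const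
      filter_upwards [hopen.mem_nhds htl] with u hu
      simp only [Fsl, if_pos (le_of_lt hu)]
    rw [Dsl, if_pos htl.le]
    exact (hasDerivAt_abs_rpow t hs).congr_of_eventuallyEq h2
  · -- |t| = l : junction
    have hll : |l| = l := abs_of_pos hl
    have hlsub : l ^ (s - 2) * l = l ^ (s - 1) := by
      rw [← Real.rpow_add_one hl.ne' (s-2)]; ring_nf
    rcases abs_eq hl.le |>.mp htl with h1 | h1
    · -- t = l
      subst h1
      have hval : s * |t| ^ (s - 2) * t = s * t ^ (s - 1) := by
        rw [hll]; rw [mul_assoc, hlsub]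
      have h1 : HasDerivWithinAt (Fsl s t) (s * t ^ (s - 1)) (Icc 0 t) t := by
        have hd := (hasDerivAt_abs_rpow t hs).hasDerivWithinAt (s := Icc 0 t)
        rw [hval] at hd
        refine hd.congr (fun u hu => ?_) ?_
        · have h0 : (0:ℝ) ≤ u := hu.1
          have h1 : u ≤ t := hu.2
          unfold Fsl
          rw [if_pos (abs_le.mpr ⟨by linarith, h1⟩)]
        · unfold Fsl
          rw [if_pos (by rw [hll])]
      have h2 : HasDerivWithinAt (Fsl s t) (s * t ^ (s - 1)) (Ici t) t := by
        have hd := (hasDerivAt_outer (s := s) (l := t) t hl.ne').hasDerivWithinAt (s := Ici t)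
        rw [Djunction hl] at hd
        refine hd.congr (fun u hu => ?_) ?_
        · rcases eq_or_lt_of_le (mem_Ici.mp hu) with rfl | hlt
          · unfold Fsl
            rw [if_pos (by rw [hll]), hll, Fjunction hl]
          · unfold Fsl
            have hu0 : 0 < u := lt_trans hl hlt
            rw [if_neg (by rw [abs_of_pos hu0]; push_neg; exact hlt), abs_of_pos hu0]
        · unfold Fsl
          rw [if_pos (by rw [hll]), hll, Fjunction hl]
      have h3 := (h1.union h2).hasDerivAt (by
        rw [Icc_union_Ici_eq_Ici hl.le]
        exact Ici_mem_nhds hl)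
      rw [Dsl, if_pos (le_of_eq hll), hval]
      exact h3
    · -- t = -l
      subst h1
      have habs : |(-l)| = l := by rw [abs_neg, hll]
      have h1 : HasDerivWithinAt (Fsl s l) (s * |(-l)| ^ (s - 2) * (-l)) (Icc (-l) 0) (-l) := by
        have hd := (hasDerivAt_abs_rpow (-l) hs).hasDerivWithinAt (s := Icc (-l) 0)
        refine hd.congr (fun u hu => ?_) ?_
        · have h0 : -l ≤ u := hu.1
          have h1 : u ≤ 0 := hu.2
          unfold Fsl
          rw [if_pos (abs_le.mpr ⟨h0, by linarith⟩)]
        · unfold Fsl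
          rw [if_pos (le_of_eq habs)]
      have h2 : HasDerivWithinAt (Fsl s l) (s * |(-l)| ^ (s - 2) * (-l)) (Iic (-l)) (-l) := by
        have hneg : HasDerivAt (fun u : ℝ => (1 - s ^ 2) * l ^ s
            + (s * (s + 1) / 2) * l ^ (s - 1) * (-u) + (s * (s - 1) / 2) * l ^ (s + 1) * (-u)⁻¹)
            ((s * (s + 1) / 2 * l ^ (s - 1) - s * (s - 1) / 2 * l ^ (s + 1) / (-(-l)) ^ 2) * (-1))
            (-l) := by
          have := (hasDerivAt_outer (s := s) (l := l) (-(-l))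
            (by rw [neg_neg]; exact hl.ne')).comp (-l) (hasDerivAt_neg (-l))
          exact this
        have hval2 : (s * (s + 1) / 2 * l ^ (s - 1) - s * (s - 1) / 2 * l ^ (s + 1) / (-(-l)) ^ 2)
            * (-1) = s * |(-l)| ^ (s - 2) * (-l) := by
          rw [neg_neg, Djunction hl, habs]
          rw [show s * l ^ (s-2) * (-l) = -(s * (l ^ (s-2) * l)) by ring, hlsub]
          ring
        have hd := (hval2 ▸ hneg).hasDerivWithinAt (s := Iic (-l))
        refine hd.congr (fun u hu => ?_) ?_
        · rcases eq_or_lt_of_le (mem_Iic.mp hu) with rfl | hlt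
          · unfold Fsl
            rw [if_pos (le_of_eq habs), habs, neg_neg, Fjunction hl]
          · unfold Fsl
            have hu0 : u < 0 := by linarith
            rw [if_neg (by rw [abs_of_neg hu0]; push_neg; linarith), abs_of_neg hu0]
        · unfold Fsl
          rw [if_pos (le_of_eq habs), habs, neg_neg, Fjunction hl]
      have h3 := (h2.union h1).hasDerivAt (by
        rw [Iic_union_Icc_eq_Iic (by linarith : -l ≤ 0)]
        exact Iic_mem_nhds (by linarith))
      rw [Dsl, if_pos (le_of_eq habs)]
      exact h3
  · -- |t| > l : outer region
    have ht0 : t ≠ 0 := by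
      intro h; rw [h, abs_zero] at htl; linarith
    rcases abs_gt_cases hl htl with h1 | h1
    · -- l < t
      have h2 : Fsl s l =ᶠ[𝓝 t] fun u => (1 - s ^ 2) * l ^ s
          + (s * (s + 1) / 2) * l ^ (s - 1) * u + (s * (s - 1) / 2) * l ^ (s + 1) * u⁻¹ := by
        filter_upwards [Ioi_mem_nhds h1] with u hu
        have hu0 : 0 < u := lt_trans hl hu
        have habs : |u| = u := abs_of_pos hu0
        simp only [Fsl, habs, if_neg (not_le.mpr (mem_Ioi.mp hu))]
      rw [Dsl, if_neg (not_le.mpr htl), Real.sign_of_pos (lt_trans hl h1), mul_one]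
      exact (hasDerivAt_outer t ht0).congr_of_eventuallyEq h2
    · -- t < -l
      have h2 : Fsl s l =ᶠ[𝓝 t] fun u => (1 - s ^ 2) * l ^ s
          + (s * (s + 1) / 2) * l ^ (s - 1) * (-u) + (s * (s - 1) / 2) * l ^ (s + 1) * (-u)⁻¹ := by
        filter_upwards [Iio_mem_nhds h1] with u hu
        have hu' : u < -l := hu
        have hu0 : u < 0 := by linarith
        have habs : |u| = -u := abs_of_neg hu0
        have hule : ¬ |u| ≤ l := by rw [habs]; push_neg; linarith
        unfold Fsl
        rw [if_neg hule, habs]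
      have hneg : HasDerivAt (fun u : ℝ => (1 - s ^ 2) * l ^ s
          + (s * (s + 1) / 2) * l ^ (s - 1) * (-u) + (s * (s - 1) / 2) * l ^ (s + 1) * (-u)⁻¹)
          ((s * (s + 1) / 2 * l ^ (s - 1) - s * (s - 1) / 2 * l ^ (s + 1) / (-t) ^ 2) * (-1)) t := by
        have := (hasDerivAt_outer (s := s) (l := l) (-t) (neg_ne_zero.mpr ht0)).comp t
          (hasDerivAt_neg t)
        exact this
      rw [Dsl, if_neg (not_le.mpr htl), Real.sign_of_neg (by linarith : t < 0)]
      have heq : (s * (s + 1) / 2 * l ^ (s - 1) - s * (s - 1) / 2 * l ^ (s + 1) / (-t) ^ 2) * (-1)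
          = (s * (s + 1) / 2 * l ^ (s - 1) - s * (s - 1) / 2 * l ^ (s + 1) / t ^ 2) * (-1) := by
        ring_nf
      exact (heq ▸ hneg).congr_of_eventuallyEq h2

noncomputable def Esl (s l t : ℝ) : ℝ :=
  if |t| ≤ l then s * (s - 1) * |t| ^ (s - 2)
  else s * (s - 1) * l ^ (s + 1) / |t| ^ 3

lemma Ejunction {s l : ℝ} (hl : 0 < l) :
    s * (s - 1) * l ^ (s + 1) / l ^ 3 = s * (s - 1) * l ^ (s - 2) := by
  rw [hlpow hl 3 (by push_cast; ring : (s-2) + (3:ℕ) = s + 1)]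
  have h3 : (l:ℝ) ^ (3:ℕ) ≠ 0 := by positivity
  field_simp

lemma hasDerivAt_innerD {s : ℝ} (t : ℝ) (ht : t ≠ 0) :
    HasDerivAt (fun u : ℝ => s * u ^ (s - 1)) (s * (s - 1) * t ^ (s - 2)) t := by
  have h := (Real.hasDerivAt_rpow_const (p := s - 1) (Or.inl ht)).const_mul s
  rw [show s - 1 - 1 = s - 2 from by ring] at h
  refine h.congr_deriv ?_; symm
  ring

lemma hasDerivAt_outerD {s l : ℝ} (t : ℝ) (ht : t ≠ 0) :
    HasDerivAt (fun u : ℝ => s * (s + 1) / 2 * l ^ (s - 1)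
      - s * (s - 1) / 2 * l ^ (s + 1) * (u ^ 2)⁻¹)
      (s * (s - 1) * l ^ (s + 1) / t ^ 3) t := by
  have h := (((hasDerivAt_pow 2 t).inv (pow_ne_zero 2 ht)).const_mul
    (s * (s - 1) / 2 * l ^ (s + 1))).const_sub (s * (s + 1) / 2 * l ^ (s - 1))
  refine h.congr_deriv ?_; symm
  have h2 : (t:ℝ) ^ (2:ℕ) ≠ 0 := pow_ne_zero 2 ht
  field_simp
  ring

lemma hasDerivAt_outerDneg {s l : ℝ} (t : ℝ) (ht : t ≠ 0) :
    HasDerivAt (fun u : ℝ => s * (s - 1) / 2 * l ^ (s + 1) * (u ^ 2)⁻¹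
      - s * (s + 1) / 2 * l ^ (s - 1))
      (-(s * (s - 1) * l ^ (s + 1) / t ^ 3)) t := by
  have h := (((hasDerivAt_pow 2 t).inv (pow_ne_zero 2 ht)).const_mul
    (s * (s - 1) / 2 * l ^ (s + 1))).sub_const (s * (s + 1) / 2 * l ^ (s - 1))
  refine h.congr_deriv ?_; symm
  have h2 : (t:ℝ) ^ (2:ℕ) ≠ 0 := pow_ne_zero 2 ht
  field_simp
  ring

lemma hasDerivAt_innerDneg {s : ℝ} (t : ℝ) (ht : t ≠ 0) :
    HasDerivAt (fun u : ℝ => -(s * (-u) ^ (s - 1))) (s * (s - 1) * (-t) ^ (s - 2)) t := by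
  have h := ((hasDerivAt_innerD (s := s) (-t) (neg_ne_zero.mpr ht)).comp t (hasDerivAt_neg t)).neg
  refine h.congr_deriv ?_; symm
  ring

lemma Dsl_pos {s l u : ℝ} (hu : 0 < u) (hul : u ≤ l) :
    Dsl s l u = s * u ^ (s - 1) := by
  unfold Dsl
  rw [if_pos (abs_le.mpr ⟨by linarith, hul⟩), abs_of_pos hu, mul_assoc,
    ← Real.rpow_add_one hu.ne' (s - 2)]
  ring_nf

lemma Dsl_nonneg_eq {s l u : ℝ} (hs : 1 < s) (hu : 0 ≤ u) (hul : u ≤ l) (hl : 0 < l) :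
    Dsl s l u = s * u ^ (s - 1) := by
  rcases eq_or_lt_of_le hu with rfl | hu0
  · unfold Dsl
    rw [if_pos (by rw [abs_zero]; linarith), Real.zero_rpow (by linarith : s - 1 ≠ 0)]
    simp
  · exact Dsl_pos hu0 hul

lemma Dsl_neg {s l u : ℝ} (hu : u < 0) (hul : -l ≤ u) :
    Dsl s l u = -(s * (-u) ^ (s - 1)) := by
  unfold Dsl
  rw [if_pos (abs_le.mpr ⟨hul, by linarith⟩), abs_of_neg hu]
  rw [show s * (-u) ^ (s - 2) * u = -(s * ((-u) ^ (s - 2) * (-u))) by ring,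
    ← Real.rpow_add_one (neg_ne_zero.mpr hu.ne) (s - 2)]
  ring_nf

lemma Dsl_nonpos_eq {s l u : ℝ} (hs : 1 < s) (hu : u ≤ 0) (hul : -l ≤ u) (hl : 0 < l) :
    Dsl s l u = -(s * (-u) ^ (s - 1)) := by
  rcases eq_or_lt_of_le hu with rfl | hu0
  · unfold Dsl
    rw [if_pos (by rw [abs_zero]; linarith), neg_zero, Real.zero_rpow (by linarith : s - 1 ≠ 0)]
    simp
  · exact Dsl_neg hu0 hul

lemma Dsl_outer_pos {s l u : ℝ} (hl : 0 < l) (hu : l < u) :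
    Dsl s l u = s * (s + 1) / 2 * l ^ (s - 1) - s * (s - 1) / 2 * l ^ (s + 1) * (u ^ 2)⁻¹ := by
  have hu0 : 0 < u := lt_trans hl hu
  unfold Dsl
  rw [if_neg (by rw [abs_of_pos hu0]; push_neg; exact hu), Real.sign_of_pos hu0]
  field_simp

lemma Dsl_outer_neg {s l u : ℝ} (hl : 0 < l) (hu : u < -l) :
    Dsl s l u = s * (s - 1) / 2 * l ^ (s + 1) * (u ^ 2)⁻¹ - s * (s + 1) / 2 * l ^ (s - 1) := by
  have hu0 : u < 0 := by linarith
  unfold Dsl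
  rw [if_neg (by rw [abs_of_neg hu0]; push_neg; linarith), Real.sign_of_neg hu0]
  field_simp
  ring

lemma hasDerivAt_Dsl {s l : ℝ} (hs : 1 < s) (hl : 0 < l) {t : ℝ} (ht0 : t ≠ 0) :
    HasDerivAt (Dsl s l) (Esl s l t) t := by
  have hll : |l| = l := abs_of_pos hl
  rcases lt_trichotomy (|t|) l with htl | htl | htl
  · -- inner
    rw [Esl, if_pos htl.le]
    rcases ht0.lt_or_gt with ht | ht
    · -- t < 0
      have h2 : Dsl s l =ᶠ[𝓝 t] fun u => -(s * (-u) ^ (s - 1)) := by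
        have hopen : IsOpen ({u : ℝ | |u| < l} ∩ Iio 0) :=
          (isOpen_lt (by fun_prop) continuous_const).inter isOpen_Iio
        filter_upwards [hopen.mem_nhds ⟨htl, ht⟩] with u hu
        have hu1 : |u| < l := hu.1
        exact Dsl_neg hu.2 (by have := abs_lt.mp hu1; linarith)
      have h := (hasDerivAt_innerDneg t ht0).congr_of_eventuallyEq h2
      rw [abs_of_neg ht]
      exact h
    · -- t > 0
      have h2 : Dsl s l =ᶠ[𝓝 t] fun u => s * u ^ (s - 1) := by
        have hopen : IsOpen ({u : ℝ | |u| < l} ∩ Ioi 0) :=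
          (isOpen_lt (by fun_prop) continuous_const).inter isOpen_Ioi
        filter_upwards [hopen.mem_nhds ⟨htl, ht⟩] with u hu
        have hu1 : |u| < l := hu.1
        exact Dsl_pos hu.2 (by have := abs_lt.mp hu1; linarith)
      have h := (hasDerivAt_innerD t ht0).congr_of_eventuallyEq h2
      rw [abs_of_pos ht]
      exact h
  · -- junction |t| = l
    rcases abs_eq hl.le |>.mp htl with h1 | h1
    · -- t = l
      subst h1
      have hDt : Dsl s t t = s * t ^ (s - 1) := Dsl_nonneg_eq hs hl.le le_rfl hl
      have hjun : s * (s + 1) / 2 * t ^ (s - 1) - s * (s - 1) / 2 * t ^ (s + 1) * (t ^ 2)⁻¹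
          = s * t ^ (s - 1) := by
        rw [← Djunction hl]
        ring
      have h1 : HasDerivWithinAt (Dsl s t) (s * (s - 1) * t ^ (s - 2)) (Icc 0 t) t :=
        ((hasDerivAt_innerD t ht0).hasDerivWithinAt).congr
          (fun u hu => Dsl_nonneg_eq hs hu.1 hu.2 hl) (by rw [hDt])
      have h2 : HasDerivWithinAt (Dsl s t) (s * (s - 1) * t ^ (s - 2)) (Ici t) t := by
        have hd := (hasDerivAt_outerD (s := s) (l := t) t ht0).hasDerivWithinAt (s := Ici t)
        rw [Ejunction hl] at hd
        refine hd.congr (fun u hu => ?_) (by rw [hDt, hjun])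
        rcases eq_or_lt_of_le (mem_Ici.mp hu) with rfl | hlt
        · rw [hDt, hjun]
        · exact Dsl_outer_pos hl hlt
      have h3 := (h1.union h2).hasDerivAt (by
        rw [Icc_union_Ici_eq_Ici hl.le]
        exact Ici_mem_nhds hl)
      rw [Esl, if_pos (le_of_eq htl), htl]
      exact h3
    · -- t = -l
      subst h1
      have habs : |(-l)| = l := by rw [abs_neg, abs_of_pos hl]
      have hDt : Dsl s l (-l) = -(s * l ^ (s - 1)) := by
        rw [Dsl_nonpos_eq hs (by linarith) le_rfl hl, neg_neg]
      have hjun : s * (s - 1) / 2 * l ^ (s + 1) * ((-l) ^ 2)⁻¹ - s * (s + 1) / 2 * l ^ (s - 1)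
          = -(s * l ^ (s - 1)) := by
        rw [← Djunction hl]
        rw [show ((-l) ^ 2 : ℝ) = l ^ 2 by ring]
        ring
      have h1 : HasDerivWithinAt (Dsl s l) (s * (s - 1) * l ^ (s - 2)) (Icc (-l) 0) (-l) := by
        have hd := (hasDerivAt_innerDneg (s := s) (-l) ht0).hasDerivWithinAt (s := Icc (-l) 0)
        rw [neg_neg] at hd
        refine hd.congr (fun u hu => Dsl_nonpos_eq hs hu.2 hu.1 hl) ?_
        rw [Dsl_nonpos_eq hs (by linarith : (-l:ℝ) ≤ 0) le_rfl hl]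
      have h2 : HasDerivWithinAt (Dsl s l) (s * (s - 1) * l ^ (s - 2)) (Iic (-l)) (-l) := by
        have hd := (hasDerivAt_outerDneg (s := s) (l := l) (-l) ht0).hasDerivWithinAt
          (s := Iic (-l))
        have hv : -(s * (s - 1) * l ^ (s + 1) / (-l) ^ 3) = s * (s - 1) * l ^ (s - 2) := by
          rw [← Ejunction hl, show ((-l) ^ 3 : ℝ) = -(l ^ 3) by ring, div_neg, neg_neg]
        rw [hv] at hd
        refine hd.congr (fun u hu => ?_) (by rw [hDt, hjun])
        rcases eq_or_lt_of_le (mem_Iic.mp hu) with rfl | hlt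
        · rw [hDt, hjun]
        · exact Dsl_outer_neg hl hlt
      have h3 := (h2.union h1).hasDerivAt (by
        rw [Iic_union_Icc_eq_Iic (by linarith : -l ≤ (0:ℝ))]
        exact Iic_mem_nhds (by linarith))
      rw [Esl, if_pos (le_of_eq habs), habs]
      exact h3
  · -- outer
    rw [Esl, if_neg (not_le.mpr htl)]
    rcases lt_abs.mp htl with h1 | h1
    · -- l < t
      have h2 : Dsl s l =ᶠ[𝓝 t] fun u => s * (s + 1) / 2 * l ^ (s - 1)
          - s * (s - 1) / 2 * l ^ (s + 1) * (u ^ 2)⁻¹ := by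
        filter_upwards [Ioi_mem_nhds h1] with u hu
        exact Dsl_outer_pos hl hu
      have h := (hasDerivAt_outerD t ht0).congr_of_eventuallyEq h2
      rw [abs_of_pos (lt_trans hl h1)]
      exact h
    · -- t < -l
      have h1' : t < -l := by linarith
      have h2 : Dsl s l =ᶠ[𝓝 t] fun u => s * (s - 1) / 2 * l ^ (s + 1) * (u ^ 2)⁻¹
          - s * (s + 1) / 2 * l ^ (s - 1) := by
        filter_upwards [Iio_mem_nhds h1'] with u hu
        exact Dsl_outer_neg hl hu
      have h := (hasDerivAt_outerDneg t ht0).congr_of_eventuallyEq h2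
      have ht : t < 0 := by linarith
      have habs : |t| = -t := abs_of_neg ht
      rw [habs]
      have : s * (s - 1) * l ^ (s + 1) / (-t) ^ 3 = -(s * (s - 1) * l ^ (s + 1) / t ^ 3) := by
        rw [show ((-t) ^ 3 : ℝ) = -(t ^ 3) by ring, div_neg]
      rw [this]
      exact h

lemma hasDerivAt_zero_mul {c p : ℝ} (hp : 0 < p) :
    HasDerivAt (fun u : ℝ => c * |u| ^ p * u) 0 0 := by
  rw [hasDerivAt_iff_tendsto_slope]
  have hcont : ContinuousAt (fun u : ℝ => c * |u| ^ p) 0 := by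
    exact ((Real.continuousAt_rpow_const |(0:ℝ)| p (Or.inr hp.le)).comp
      continuous_abs.continuousAt).const_mul c
  have h0 : c * |(0:ℝ)| ^ p = 0 := by
    rw [abs_zero, Real.zero_rpow hp.ne', mul_zero]
  have ht : Tendsto (fun u : ℝ => c * |u| ^ p) (𝓝[≠] (0:ℝ)) (𝓝 0) := by
    have := hcont.tendsto
    rw [h0] at this
    exact this.mono_left nhdsWithin_le_nhds
  refine ht.congr' ?_
  filter_upwards [self_mem_nhdsWithin] with u hu
  have hu0 : u ≠ 0 := hu
  rw [slope_def_field]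
  field_simp
  rw [sub_zero, mul_zero, sub_zero]; ring

lemma Fsl_nonneg {s l : ℝ} (hs : 1 < s) (hl : 0 < l) (t : ℝ) : 0 ≤ Fsl s l t := by
  unfold Fsl
  split_ifs with h
  · exact Real.rpow_nonneg (abs_nonneg t) s
  · push_neg at h
    set x := |t| with hx
    have hx0 : 0 < x := lt_trans hl h
    have hP : (0:ℝ) < l ^ s := Real.rpow_pos_of_pos hl s
    have e1 : l ^ (s - 1) = l ^ s / l := by
      rw [hlpow hl 1 (by push_cast; ring : (s - 1) + (1:ℕ) = s)]
      field_simp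
    have e2 : l ^ (s + 1) = l ^ s * l := by
      rw [hlpow hl 1 (by push_cast; ring : s + (1:ℕ) = s + 1)]
      norm_num
    have key : 0 ≤ s * (s + 1) / 2 * x ^ 2 - (s ^ 2 - 1) * l * x + s * (s - 1) / 2 * l ^ 2 := by
      have h1 : 0 ≤ s * (s - 1) * (x - l) ^ 2 :=
        mul_nonneg (mul_nonneg (by linarith) (by linarith)) (sq_nonneg _)
      have h2 : 0 ≤ (s - 1) * x * (x - l) :=
        mul_nonneg (mul_nonneg (by linarith) hx0.le) (by linarith)
      nlinarith [sq_nonneg x, h1, h2]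
    have hkey := div_nonneg (mul_nonneg hP.le key) (by positivity : (0:ℝ) ≤ l * x)
    have heq : l ^ s * (s * (s + 1) / 2 * x ^ 2 - (s ^ 2 - 1) * l * x + s * (s - 1) / 2 * l ^ 2)
        / (l * x) = (1 - s ^ 2) * l ^ s + (s * (s + 1) / 2) * l ^ (s - 1) * x
        + (s * (s - 1) / 2) * l ^ (s + 1) * x⁻¹ := by
      rw [e1, e2]
      field_simp
      ring
    rw [← heq]
    exact hkey

/-- For `s > 1`, `l ≥ 3`, and `G_{s,l} = F_{s,l} · F'_{s,l}`:
`(F'_{s,l}(t))² ≤ s² · G'_{s,l}(t)` for every `t ∈ ℝ`. -/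
theorem stmt_8 (s l : ℝ) (hs : 1 < s) (hl : 3 ≤ l) :
    ∀ t : ℝ, (deriv (Fsl s l) t) ^ 2 ≤
      s ^ 2 * deriv (fun u => Fsl s l u * deriv (Fsl s l) u) t := by
  have hl0 : (0:ℝ) < l := by linarith
  have hD : deriv (Fsl s l) = Dsl s l := funext fun t => (hasDerivAt_Fsl hs hl0 t).deriv
  intro t
  rw [hD]
  rcases eq_or_ne t 0 with rfl | ht0
  · -- t = 0
    have hG : HasDerivAt (fun u => Fsl s l u * Dsl s l u) 0 0 := by
      have h0 : HasDerivAt (fun u : ℝ => s * |u| ^ (2 * s - 2) * u) 0 0 :=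
        hasDerivAt_zero_mul (by linarith)
      refine h0.congr_of_eventuallyEq ?_
      have hopen : IsOpen {u : ℝ | |u| < l} := isOpen_lt (by fun_prop) continuous_const
      filter_upwards [hopen.mem_nhds (by simpa using hl0)] with u hu
      have hu' : |u| ≤ l := le_of_lt hu
      unfold Fsl Dsl
      rw [if_pos hu', if_pos hu']
      rcases eq_or_ne u 0 with rfl | hu0
      · simp
      · have habs : |u| ^ s * |u| ^ (s - 2) = |u| ^ (2 * s - 2) := by
          rw [← Real.rpow_add (abs_pos.mpr hu0)]
          ring_nf
        rw [show |u| ^ s * (s * |u| ^ (s - 2) * u) = s * (|u| ^ s * |u| ^ (s - 2)) * u by ring,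
          habs]
    rw [hG.deriv]
    have hD0 : Dsl s l 0 = 0 := by
      unfold Dsl
      simp [hl0.le]
    rw [hD0]
    norm_num
  · have hG := (hasDerivAt_Fsl hs hl0 t).mul (hasDerivAt_Dsl hs hl0 ht0)
    rw [show (fun u => Fsl s l u * Dsl s l u) = Fsl s l * Dsl s l from rfl, hG.deriv]
    by_cases htl : |t| ≤ l
    · -- inner region (including boundary)
      unfold Fsl Dsl Esl
      rw [if_pos htl, if_pos htl, if_pos htl]
      set A := |t| ^ (s - 2) with hA
      have hA0 : 0 ≤ A := Real.rpow_nonneg (abs_nonneg t) _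
      have habs2 : |t| ^ s = A * t ^ 2 := by
        rw [hA, ← sq_abs t, hlpow (abs_pos.mpr ht0) 2 (by push_cast; ring : (s - 2) + (2:ℕ) = s)]
      rw [habs2]
      have hX : 0 ≤ A * A * t ^ 2 := mul_nonneg (mul_nonneg hA0 hA0) (sq_nonneg t)
      nlinarith [hX, mul_nonneg hX (by nlinarith : (0:ℝ) ≤ 2 * s ^ 2 - s - 1),
        sq_nonneg (s * A * t)]
    · -- outer region
      push_neg at htl
      unfold Esl
      rw [if_neg (not_le.mpr htl)]
      have hF0 : 0 ≤ Fsl s l t := Fsl_nonneg hs hl0 t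
      have hE0 : 0 ≤ s * (s - 1) * l ^ (s + 1) / |t| ^ 3 := by
        apply div_nonneg
        · exact mul_nonneg (mul_nonneg (by linarith) (by linarith))
            (Real.rpow_nonneg hl0.le _)
        · positivity
      set d := Dsl s l t
      have hs2 : (0:ℝ) ≤ s ^ 2 - 1 := by nlinarith
      have k1 : 0 ≤ (s ^ 2 - 1) * d ^ 2 := mul_nonneg hs2 (sq_nonneg d)
      have k2 : 0 ≤ s ^ 2 * (Fsl s l t * (s * (s - 1) * l ^ (s + 1) / |t| ^ 3)) :=
        mul_nonneg (sq_nonneg s) (mul_nonneg hF0 hE0)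
      nlinarith [k1, k2]
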